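/- Let T, S be partial isometries on a complex Hilbert space H. Then T + λS is a partial isometry for every complex λ with |λ| = 1 if and only if T* S = 0 and T S* = 0. -/

import Mathlib

open ContinuousLinearMap

-- cube expansion of a sum in a star ring with ℂ-module structure
private lemma expand_cube {A : Type*} [Ring A] [StarRing A] [Module ℂ A]
    [StarModule ℂ A] [SMulCommClass ℂ A A] [IsScalarTower ℂ A A]
    (t s : A) (l : ℂ) :
    (t + l • s) * star (t + l • s) * (t + l • s) =
      t * star t * t
        + l • (t * star t * s + s * star t * t)
        + (starRingEnd ℂ l) • (t * star s * t)
        + (l * starRingEnd ℂ l) • (t * star s * s + s * star s * t)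
        + (l * l) • (s * star t * s)
        + ((l * starRingEnd ℂ l) * l) • (s * star s * s) := by
  simp only [star_add, star_smul, RCLike.star_def, mul_add, add_mul,
    smul_mul_assoc, mul_smul_comm, smul_smul, smul_add]
  module

section aux

variable {A : Type*} [NormedRing A] [StarRing A] [CStarRing A]
  [PartialOrder A] [StarOrderedRing A]

private lemma aux_zero (t s : A) (hT : t * star t * t = t) (hS : s * star s * s = s)
    (h1 : t * star s * s + s * star s * t = 0) : t * star s = 0 := by
  set b := t * star s with hb_def
  have hsb : star b = s * star t := by simp [hb_def, star_mul]
  have h1' : t * star s * s = -(s * star s * t) := by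
    rw [add_eq_zero_iff_eq_neg] at h1; exact h1
  have hx1 : b * star b = -(s * star s * (t * star t)) := by
    rw [hsb, hb_def]
    calc t * star s * (s * star t) = t * star s * s * star t := by noncomm_ring
      _ = -(s * star s * t) * star t := by rw [h1']
      _ = -(s * star s * (t * star t)) := by noncomm_ring
  have hxsa : star (b * star b) = b * star b := by rw [star_mul, star_star]
  have he : star (t * star t) = t * star t := by rw [star_mul, star_star]
  have hf : star (s * star s) = s * star s := by rw [star_mul, star_star]
  have hcomm : t * star t * (s * star s) = s * star s * (t * star t) := by
    have h2 : star (b * star b) = -(star (t * star t) * star (s * star s)) := by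
      rw [hx1, star_neg, star_mul]
    rw [hxsa, he, hf, hx1] at h2
    exact (neg_injective h2).symm
  have hee : t * star t * (t * star t) = t * star t := by
    calc t * star t * (t * star t) = t * star t * t * star t := by noncomm_ring
      _ = t * star t := by rw [hT]
  have hff : s * star s * (s * star s) = s * star s := by
    calc s * star s * (s * star s) = s * star s * s * star s := by noncomm_ring
      _ = s * star s := by rw [hS]
  have hxx : (b * star b) * (b * star b) = -(b * star b) := by
    rw [hx1]
    calc -(s * star s * (t * star t)) * -(s * star s * (t * star t))
        = s * star s * (t * star t * (s * star s)) * (t * star t) := by noncomm_ring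
      _ = s * star s * (s * star s * (t * star t)) * (t * star t) := by rw [hcomm]
      _ = (s * star s * (s * star s)) * ((t * star t) * (t * star t)) := by noncomm_ring
      _ = s * star s * (t * star t) := by rw [hee, hff]
      _ = -(-(s * star s * (t * star t))) := by rw [neg_neg]
  have hpos1 : (0 : A) ≤ b * star b := mul_star_self_nonneg b
  have hpos2 : (0 : A) ≤ -(b * star b) := by
    rw [← hxx]
    calc (0 : A) ≤ star (b * star b) * (b * star b) := star_mul_self_nonneg _
      _ = (b * star b) * (b * star b) := by rw [hxsa]
  have hx0 : b * star b = 0 := le_antisymm (neg_nonneg.mp hpos2) hpos1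
  exact (CStarRing.mul_star_self_eq_zero_iff b).mp hx0

end aux

theorem stmt_5 {H : Type*} [NormedAddCommGroup H] [InnerProductSpace ℂ H]
    [CompleteSpace H] (T S : H →L[ℂ] H)
    (hT : T * adjoint T * T = T) (hS : S * adjoint S * S = S) :
    (∀ lam : ℂ, ‖lam‖ = 1 →
        (T + lam • S) * adjoint (T + lam • S) * (T + lam • S) = T + lam • S) ↔
      (adjoint T * S = 0 ∧ T * adjoint S = 0) := by
  simp only [← ContinuousLinearMap.star_eq_adjoint] at hT hS ⊢
  constructor
  · intro h
    -- extract the coefficient equations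
    have key : ∀ l : ℂ, ‖l‖ = 1 →
        l • (T * star T * S + S * star T * T)
          + (starRingEnd ℂ l) • (T * star S * T)
          + (T * star S * S + S * star S * T)
          + (l * l) • (S * star T * S) = 0 := by
      intro l hl
      have hc : l * starRingEnd ℂ l = 1 := by
        rw [Complex.mul_conj]
        norm_cast
        rw [Complex.normSq_eq_norm_sq, hl]; norm_num
      have e := h l hl
      rw [expand_cube, hT, hS, hc, one_smul, one_mul] at e
      have e2 : (l • (T * star T * S + S * star T * T)
          + (starRingEnd ℂ l) • (T * star S * T)
          + (T * star S * S + S * star S * T)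
          + (l * l) • (S * star T * S)) + (T + l • S)
          = 0 + (T + l • S) := by
        rw [zero_add]
        conv_rhs => rw [← e]
        abel
      exact add_right_cancel e2
    set Q := T * star T * S + S * star T * T with hQdef
    set U := T * star S * T with hUdef
    set R := T * star S * S + S * star S * T with hRdef
    set P := S * star T * S with hPdef
    have k1 := key 1 (by norm_num)
    have k2 := key (-1) (by norm_num)
    have k3 := key Complex.I (by simp)
    have k4 := key (-Complex.I) (by simp)
    simp only [map_one, map_neg, Complex.conj_I, one_smul, neg_smul, one_mul,
      neg_mul, mul_neg, neg_neg, mul_one, Complex.I_mul_I] at k1 k2 k3 k4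
    -- k1 : Q + U + R + P = 0
    -- k2 : -Q + -U + R + P = 0 (roughly)
    have hRP : (2 : ℂ) • (R + P) = 0 := by
      rw [show (2 : ℂ) • (R + P) = (Q + U + R + (1*1 : ℂ) • P)
          + (-Q + -U + R + ((-1)*(-1) : ℂ) • P) from by module]
      rw [show (Q + U + R + (1*1 : ℂ) • P) = 0 from by rw [← k1]; module,
          show (-Q + -U + R + ((-1)*(-1) : ℂ) • P) = 0 from by rw [← k2]; module]
      simp
    have hRmP : (2 : ℂ) • (R - P) = 0 := by
      rw [show (2 : ℂ) • (R - P) = (Complex.I • Q + -(Complex.I • U) + R + -P)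
          + (-(Complex.I • Q) + Complex.I • U + R + -P) from by module, k3, k4, add_zero]
    have hRP0 : R + P = 0 := by
      rcases smul_eq_zero.mp hRP with h' | h'
      · exact absurd h' two_ne_zero
      · exact h'
    have hRmP0 : R - P = 0 := by
      rcases smul_eq_zero.mp hRmP with h' | h'
      · exact absurd h' two_ne_zero
      · exact h'
    have hR0 : R = 0 := by
      have h2R : (2 : ℂ) • R = 0 := by
        rw [show (2 : ℂ) • R = (R + P) + (R - P) from by module, hRP0, hRmP0, add_zero]
      rcases smul_eq_zero.mp h2R with h' | h'
      · exact absurd h' two_ne_zero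
      · exact h'
    rw [hRdef] at hR0
    constructor
    · -- star T * S = 0, via aux_zero applied to (star T, star S)
      have hT' : star T * star (star T) * star T = star T := by
        rw [star_star]
        calc star T * T * star T = star (T * star T * T) := by
              simp only [star_mul, star_star, mul_assoc]
          _ = star T := by rw [hT]
      have hS' : star S * star (star S) * star S = star S := by
        rw [star_star]
        calc star S * S * star S = star (S * star S * S) := by
              simp only [star_mul, star_star, mul_assoc]
          _ = star S := by rw [hS]
      have h1s : star T * star (star S) * star S + star S * star (star S) * star T = 0 := by
        rw [star_star]
        have hst := congrArg star hR0
        simp only [star_add, star_mul, star_star, star_zero] at hst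
        calc star T * S * star S + star S * S * star T
            = star S * (S * star T) + star T * (S * star S) := by
              simp only [mul_assoc]; rw [add_comm]
          _ = 0 := hst
      have := aux_zero (star T) (star S) hT' hS' h1s
      rwa [star_star] at this
    · exact aux_zero T S hT hS hR0
  · intro ⟨hTS, hST⟩ lam hlam
    have hST' : S * star T = 0 := by
      have := congrArg star hST
      simpa only [star_mul, star_star, star_zero] using this
    have hTS' : star S * T = 0 := by
      have := congrArg star hTS
      simpa only [star_mul, star_star, star_zero] using this
    have hc : lam * starRingEnd ℂ lam = 1 := by
      rw [Complex.mul_conj]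
      norm_cast
      rw [Complex.normSq_eq_norm_sq, hlam]; norm_num
    rw [expand_cube, hT, hS, hc, one_smul, one_mul]
    have c2 : T * star T * S + S * star T * T = 0 := by
      rw [mul_assoc T (star T) S, hTS, mul_zero, hST', zero_mul, add_zero]
    have c3 : T * star S * T = 0 := by rw [hST, zero_mul]
    have c4 : T * star S * S + S * star S * T = 0 := by
      rw [hST, zero_mul, mul_assoc S (star S) T, hTS', mul_zero, add_zero]
    have c5 : S * star T * S = 0 := by rw [hST', zero_mul]
    rw [c2, c3, c4, c5]
    simp
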